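/- arXiv:2604.16080 — 2 statements merged into one kernel-verified Lean document; each statement's English description precedes it below -/
import Mathlib

section
/- Let S and S' be finite sets (of map entries) and consider a sequence of atomic single-element map operations that starts from S, first inserts the elements of S' \ S one at a time (in any order), and then deletes the elements of S \ S' one at a time (in any order), ending at S'. Then every intermediate set M in the sequence satisfies M ⊆ S ∪ S', and moreover S ⊆ M or S' ⊆ M (hence in particular S ∩ S' ⊆ M). -/
/-- An atomic single-element map operation: delete or insert one entry. -/
inductive MapOp (α : Type*) where
  | del (a : α)
  | ins (a : α)

/-- Apply an atomic operation to a map state (a finite set of entries). -/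
def MapOp.apply {α : Type*} [DecidableEq α] : MapOp α → Finset α → Finset α
  | .del a, M => M.erase a
  | .ins a, M => insert a M

/-- All states visited while executing a list of operations from an initial state
(including the initial and final states). -/
def mapStates {α : Type*} [DecidableEq α] (ops : List (MapOp α)) (init : Finset α) :
    List (Finset α) :=
  ops.scanl (fun M op => op.apply M) init


section Aux
variable {α : Type*} [DecidableEq α]

lemma foldl_ins (l : List α) (M : Finset α) :
    (l.map MapOp.ins).foldl (fun M op => op.apply M) M = M ∪ l.toFinset := by
  induction l generalizing M with
  | nil => simp
  | cons a t ih =>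
      simp only [List.map_cons, List.foldl_cons, List.toFinset_cons]
      rw [ih]
      show insert a M ∪ t.toFinset = _
      ext x
      simp only [Finset.mem_union, Finset.mem_insert, List.mem_toFinset]
      tauto

lemma foldl_del (l : List α) (M : Finset α) :
    (l.map MapOp.del).foldl (fun M op => op.apply M) M = M \ l.toFinset := by
  induction l generalizing M with
  | nil => simp
  | cons a t ih =>
      simp only [List.map_cons, List.foldl_cons, List.toFinset_cons]
      rw [ih]
      show M.erase a \ t.toFinset = _
      ext x
      simp only [Finset.mem_sdiff, Finset.mem_erase, Finset.mem_insert, List.mem_toFinset]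
      tauto

lemma states_inv (P : Finset α → Prop) :
    ∀ (ops : List (MapOp α)) (init : Finset α), P init →
    (∀ op ∈ ops, ∀ M, P M → P (op.apply M)) →
    ∀ M ∈ mapStates ops init, P M := by
  intro ops
  induction ops with
  | nil =>
      intro init h _ M hM
      simp only [mapStates, List.scanl_nil, List.mem_singleton] at hM
      exact hM ▸ h
  | cons op t ih =>
      intro init h hpres M hM
      simp only [mapStates, List.scanl_cons, List.nil_append, List.append_nil,
        List.singleton_append, List.mem_cons] at hM
      rcases hM with rfl | hM
      · exact h
      · exact ih (op.apply init) (hpres op (by simp) _ h)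
          (fun o ho => hpres o (by simp [ho])) M (by simpa [mapStates] using hM)

lemma mem_mapStates_append (l1 l2 : List (MapOp α)) (init : Finset α) (M : Finset α) :
    M ∈ mapStates (l1 ++ l2) init ↔
      M ∈ mapStates l1 init ∨ M ∈ mapStates l2 (l1.foldl (fun M op => op.apply M) init) := by
  induction l1 generalizing init with
  | nil =>
      simp only [List.nil_append, mapStates, List.scanl_nil, List.mem_singleton, List.foldl_nil]
      constructor
      · intro h; exact Or.inr h
      · rintro (rfl | h)
        · cases l2 <;> simp [List.scanl]
        · exact h
  | cons op t ih =>
      simp only [List.cons_append, mapStates, List.scanl_cons, List.nil_append,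
        List.mem_cons, List.foldl_cons]
      rw [← mapStates, ← mapStates, ← mapStates, ih]
      tauto

end Aux

/-- Fail-closed insert-before-delete update ordering.
Starting from `S`, first insert the elements of `S' \ S` one at a time (in any order),
then delete the elements of `S \ S'` one at a time (in any order).  The sequence ends at
`S'`, every intermediate state `M` satisfies `M ⊆ S ∪ S'`, and every intermediate state
satisfies `S ⊆ M` or `S' ⊆ M` (hence `S ∩ S' ⊆ M`). -/
theorem insert_before_delete_fail_closed {α : Type*} [DecidableEq α]
    (S S' : Finset α) (ins dels : List α)
    (hins : ins.Perm (S' \ S).toList)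
    (hdels : dels.Perm (S \ S').toList)
    (ops : List (MapOp α))
    (hops : ops = ins.map MapOp.ins ++ dels.map MapOp.del) :
    (ops.foldl (fun M op => op.apply M) S = S') ∧
    (∀ M ∈ mapStates ops S, M ⊆ S ∪ S' ∧ (S ⊆ M ∨ S' ⊆ M)) := by
  subst hops
  have hinsF : ins.toFinset = S' \ S := by
    ext x; simp only [List.mem_toFinset, hins.mem_iff, Finset.mem_toList]
  have hdelF : dels.toFinset = S \ S' := by
    ext x; simp only [List.mem_toFinset, hdels.mem_iff, Finset.mem_toList]
  have hfold1 : (ins.map MapOp.ins).foldl (fun M op => op.apply M) S = S ∪ S' := by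
    rw [foldl_ins, hinsF, Finset.union_sdiff_self_eq_union]
  have hfinal :
      ((ins.map MapOp.ins ++ dels.map MapOp.del).foldl (fun M op => op.apply M) S) = S' := by
    rw [List.foldl_append, hfold1, foldl_del, hdelF]
    ext x
    simp only [Finset.mem_sdiff, Finset.mem_union, not_and, not_not]
    tauto
  refine ⟨hfinal, ?_⟩
  intro M hM
  rw [mem_mapStates_append] at hM
  rcases hM with hM | hM
  · have hinv : ∀ N ∈ mapStates (ins.map MapOp.ins) S, S ⊆ N ∧ N ⊆ S ∪ S' := by
      refine states_inv (fun N => S ⊆ N ∧ N ⊆ S ∪ S') _ _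
        ⟨subset_rfl, Finset.subset_union_left⟩ ?_
      rintro op hop N ⟨h1, h2⟩
      simp only [List.mem_map] at hop
      obtain ⟨a, ha, rfl⟩ := hop
      have ha' : a ∈ S' \ S := by rw [← hinsF]; exact List.mem_toFinset.mpr ha
      exact ⟨h1.trans (Finset.subset_insert _ _),
        Finset.insert_subset (Finset.mem_union_right _ (Finset.mem_sdiff.mp ha').1) h2⟩
    exact ⟨(hinv M hM).2, Or.inl (hinv M hM).1⟩
  · rw [hfold1] at hM
    have hinv : ∀ N ∈ mapStates (dels.map MapOp.del) (S ∪ S'), S' ⊆ N ∧ N ⊆ S ∪ S' := by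
      refine states_inv (fun N => S' ⊆ N ∧ N ⊆ S ∪ S') _ _
        ⟨Finset.subset_union_right, subset_rfl⟩ ?_
      rintro op hop N ⟨h1, h2⟩
      simp only [List.mem_map] at hop
      obtain ⟨a, ha, rfl⟩ := hop
      have ha' : a ∈ S \ S' := by rw [← hdelF]; exact List.mem_toFinset.mpr ha
      refine ⟨?_, (Finset.erase_subset _ _).trans h2⟩
      intro x hx
      exact Finset.mem_erase.mpr ⟨fun h => (Finset.mem_sdiff.mp ha').2 (h ▸ hx), h1 hx⟩
    exact ⟨(hinv M hM).2, Or.inr (hinv M hM).1⟩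
end

section
/- (Non-widening policy updates.) Model a combined enforcement state as a pair (G, N) where G is a set of grant-map entries and N is a set of internal-classifier prefixes (each prefix a set of IPs). Fix a predicate g(k, pid, dst) stating that entry k authorizes the pair (pid, dst), and for dst = (d, t, q) define allow_{(G,N)}(pid, dst) = true if d ∉ ⋃N, and otherwise allow_{(G,N)}(pid, dst) = true iff ∃ k ∈ G with g(k, pid, dst). Let (G_old, N_old) and (G_new, N_new) be the old and new states. Suppose every intermediate state (G_k, N_k) observed during the update satisfies G_k ⊆ G_old ∪ G_new and (N_old ⊆ N_k or N_new ⊆ N_k). Then for every (pid, dst): if allow_{(G_old,N_old)}(pid, dst) = false and allow_{(G_new,N_new)}(pid, dst) = false, then allow_{(G_k,N_k)}(pid, dst) = false at every intermediate state; equivalently, the intermediate allow set satisfies Allow(G_k, N_k) ⊆ Allow(G_old, N_old) ∪ Allow(G_new, N_new). In particular, no destination denied by both the old and new policies is transiently permitted during the update. -/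
/-- A connection attempt: destination IP, transport protocol, and port. -/
structure ConnAttempt (IP T : Type*) where
  ip : IP
  proto : T
  port : ℕ

/-- Decision function of a combined enforcement state `(G, N)`:
allow if the destination IP is not classified internal (miss on the internal
classifier `N` means external passthrough), otherwise allow iff some grant-map
entry `k ∈ G` authorizes the pair (deny-biased semantics). -/
def allowState {K PID IP T : Type*} (g : K → PID → ConnAttempt IP T → Prop)
    (G : Set K) (N : Set (Set IP)) (pid : PID) (dst : ConnAttempt IP T) : Prop :=
  dst.ip ∉ ⋃₀ N ∨ ∃ k ∈ G, g k pid dst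

/-- Non-widening policy updates.  If every intermediate state `(Gk, Nk)`
satisfies `Gk ⊆ Gold ∪ Gnew` and (`Nold ⊆ Nk` or `Nnew ⊆ Nk`), then no pair
(pid, dst) denied by both the old and new policies is transiently permitted;
equivalently, the intermediate allow set is contained in the union of the old and
new allow sets. -/
theorem non_widening_update {K PID IP T : Type*}
    (g : K → PID → ConnAttempt IP T → Prop)
    (Gold Gnew Gk : Set K) (Nold Nnew Nk : Set (Set IP))
    (hG : Gk ⊆ Gold ∪ Gnew)
    (hN : Nold ⊆ Nk ∨ Nnew ⊆ Nk) :
    (∀ (pid : PID) (dst : ConnAttempt IP T),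
        ¬ allowState g Gold Nold pid dst → ¬ allowState g Gnew Nnew pid dst →
          ¬ allowState g Gk Nk pid dst) ∧
    (∀ pid : PID,
        {dst : ConnAttempt IP T | allowState g Gk Nk pid dst} ⊆
          {dst | allowState g Gold Nold pid dst} ∪
          {dst | allowState g Gnew Nnew pid dst}) := by
  have key : ∀ (pid : PID) (dst : ConnAttempt IP T),
      ¬ allowState g Gold Nold pid dst → ¬ allowState g Gnew Nnew pid dst →
        ¬ allowState g Gk Nk pid dst := by
    intro pid dst hold hnew hk
    simp only [allowState, not_or, not_exists] at hold hnew
    obtain ⟨ho1, ho2⟩ := hold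
    obtain ⟨hn1, hn2⟩ := hnew
    push_neg at ho1 hn1
    rcases hk with hmiss | ⟨k, hkG, hgk⟩
    · rcases hN with h | h
      · exact hmiss (Set.sUnion_mono h ho1)
      · exact hmiss (Set.sUnion_mono h hn1)
    · rcases hG hkG with h | h
      · exact ho2 k ⟨h, hgk⟩
      · exact hn2 k ⟨h, hgk⟩
  refine ⟨key, fun pid dst hdst => ?_⟩
  by_contra h
  simp only [Set.mem_union, Set.mem_setOf_eq, not_or] at h
  exact key pid dst h.1 h.2 hdst
end
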